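/- Let (X_i) be a stationary sequence adapted to a stationary filtration (F_i) with S_n = X₁+⋯+X_n. If Σ_{r≥0} ||E(S_{2^r}|F₀)||_2 / 2^{r/2} < ∞, then Σ_{k≥1} ||E(S_k|F₀)||_2 / k^{3/2} < ∞. -/

import Mathlib

open MeasureTheory ProbabilityTheory Finset

noncomputable section

/-- Binary-expansion bound for subadditive nonneg sequences. -/
lemma mw_key (a : ℕ → ℝ) (h0 : ∀ n, 0 ≤ a n)
    (hsub : ∀ m n, a (m + n) ≤ a m + a n) :
    ∀ r k, 1 ≤ k → k < 2 ^ (r + 1) → a k ≤ ∑ j ∈ range (r + 1), a (2 ^ j) := by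
  intro r
  induction r with
  | zero =>
    intro k h1 h2
    interval_cases k
    simp
  | succ r ih =>
    intro k h1 h2
    rcases lt_or_ge k (2 ^ (r + 1)) with h | h
    · calc a k ≤ ∑ j ∈ range (r + 1), a (2 ^ j) := ih k h1 h
        _ ≤ ∑ j ∈ range (r + 2), a (2 ^ j) := by
            have hs := Finset.sum_range_succ (fun j => a (2 ^ j)) (r + 1)
            rw [hs]; linarith [h0 (2 ^ (r + 1))]
    · have hk : k = 2 ^ (r + 1) + (k - 2 ^ (r + 1)) := by omega
      set m := k - 2 ^ (r + 1) with hm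
      rcases Nat.eq_zero_or_pos m with h0m | h0m
      · have : k = 2 ^ (r + 1) := by omega
        subst this
        rw [Finset.sum_range_succ]
        have : 0 ≤ ∑ j ∈ range (r + 1), a (2 ^ j) :=
          Finset.sum_nonneg fun j _ => h0 _
        linarith
      · have hmlt : m < 2 ^ (r + 1) := by
          have : 2 ^ (r + 2) = 2 ^ (r + 1) + 2 ^ (r + 1) := by ring
          omega
        calc a k = a (2 ^ (r + 1) + m) := by rw [← hk]
          _ ≤ a (2 ^ (r + 1)) + a m := hsub _ _
          _ ≤ a (2 ^ (r + 1)) + ∑ j ∈ range (r + 1), a (2 ^ j) := by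
              linarith [ih m h0m hmlt]
          _ = ∑ j ∈ range (r + 2), a (2 ^ j) := by
              have hs := Finset.sum_range_succ (fun j => a (2 ^ j)) (r + 1)
              rw [hs]; ring

lemma mw_main (a : ℕ → ℝ) (h0 : ∀ n, 0 ≤ a n)
    (hsub : ∀ m n, a (m + n) ≤ a m + a n)
    (hdyad : Summable fun r : ℕ => a (2 ^ r) / (2 : ℝ) ^ ((r : ℝ) / 2)) :
    Summable fun k : ℕ => a (k + 1) / ((k : ℝ) + 1) ^ ((3 : ℝ) / 2) := by
  set q : ℝ := (2 : ℝ) ^ (-(1 : ℝ) / 2) with hqdef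
  have hq0 : 0 < q := Real.rpow_pos_of_pos (by norm_num) _
  have hq1 : q < 1 := Real.rpow_lt_one_of_one_lt_of_neg (by norm_num) (by norm_num)
  have hqpow : ∀ j : ℕ, q ^ j = (2 : ℝ) ^ (-(j : ℝ) / 2) := by
    intro j
    rw [hqdef, ← Real.rpow_natCast ((2 : ℝ) ^ (-(1 : ℝ) / 2)) j,
      ← Real.rpow_mul (by norm_num)]
    ring_nf
  have hterm : ∀ j : ℕ, a (2 ^ j) * q ^ j = a (2 ^ j) / (2 : ℝ) ^ ((j : ℝ) / 2) := by
    intro j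
    rw [hqpow j, show -(j : ℝ) / 2 = -((j : ℝ) / 2) by ring,
      Real.rpow_neg (by norm_num)]
    ring
  set U : ℝ := ∑' r : ℕ, a (2 ^ r) / (2 : ℝ) ^ ((r : ℝ) / 2) with hUdef
  set f' : ℕ → ℝ := fun k => a k / (k : ℝ) ^ ((3 : ℝ) / 2) with hf'
  have hf'0 : ∀ k, 0 ≤ f' k := fun k =>
    div_nonneg (h0 k) (Real.rpow_nonneg (Nat.cast_nonneg k) _)
  -- block bound
  have hblock : ∀ r : ℕ, ∑ k ∈ Finset.Ico (2 ^ r) (2 ^ (r + 1)), f' k ≤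
      (∑ j ∈ range (r + 1), a (2 ^ j)) * q ^ r := by
    intro r
    set B : ℝ := ∑ j ∈ range (r + 1), a (2 ^ j) with hBdef
    have hB0 : 0 ≤ B := Finset.sum_nonneg fun j _ => h0 _
    set D : ℝ := ((2 : ℝ) ^ r) ^ ((3 : ℝ) / 2) with hDdef
    have hD0 : 0 < D := Real.rpow_pos_of_pos (by positivity) _
    have hstep : ∀ k ∈ Finset.Ico (2 ^ r) (2 ^ (r + 1)), f' k ≤ B / D := by
      intro k hk
      rw [Finset.mem_Ico] at hk
      have hk1 : 1 ≤ k := le_trans (Nat.one_le_two_pow) hk.1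
      have hak : a k ≤ B := mw_key a h0 hsub r k hk1 hk.2
      have hDk : D ≤ (k : ℝ) ^ ((3 : ℝ) / 2) := by
        apply Real.rpow_le_rpow (by positivity) _ (by norm_num)
        calc ((2 : ℝ) ^ r) = ((2 ^ r : ℕ) : ℝ) := by push_cast; ring
          _ ≤ (k : ℝ) := Nat.cast_le.mpr hk.1
      exact div_le_div₀ hB0 hak hD0 hDk
    calc ∑ k ∈ Finset.Ico (2 ^ r) (2 ^ (r + 1)), f' k
        ≤ ∑ _k ∈ Finset.Ico (2 ^ r) (2 ^ (r + 1)), (B / D) :=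
          Finset.sum_le_sum hstep
      _ = ((2 : ℝ) ^ r) * (B / D) := by
          rw [Finset.sum_const, Nat.card_Ico]
          have hcard : (2 : ℕ) ^ (r + 1) - 2 ^ r = 2 ^ r := by
            rw [pow_succ]; omega
          rw [hcard, nsmul_eq_mul]
          push_cast; ring
      _ = B * (((2 : ℝ) ^ r) / D) := by ring
      _ = B * q ^ r := by
          congr 1
          have hD : D = (2 : ℝ) ^ ((r : ℝ) * (3 / 2)) := by
            rw [hDdef, ← Real.rpow_natCast (2 : ℝ) r,
              ← Real.rpow_mul (by norm_num)]
          rw [hD, ← Real.rpow_natCast (2 : ℝ) r, ← Real.rpow_sub (by norm_num),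
            hqpow r]
          congr 1
          ring
  -- chain bound
  have hchain : ∀ R : ℕ, ∑ k ∈ Finset.Ico 1 (2 ^ R), f' k ≤
      ∑ r ∈ range R, (∑ j ∈ range (r + 1), a (2 ^ j)) * q ^ r := by
    intro R
    induction R with
    | zero => simp
    | succ R ih =>
      rw [← Finset.sum_Ico_consecutive f' (Nat.one_le_two_pow)
        (Nat.pow_le_pow_right (by norm_num) (Nat.le_succ R)),
        Finset.sum_range_succ]
      exact add_le_add ih (hblock R)
  -- swap bound
  have hswap : ∀ R : ℕ, ∑ r ∈ range R, (∑ j ∈ range (r + 1), a (2 ^ j)) * q ^ r ≤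
      (1 - q)⁻¹ * U := by
    intro R
    have hU0 : ∀ n, ∑ j ∈ range n, a (2 ^ j) * q ^ j ≤ U := by
      intro n
      calc ∑ j ∈ range n, a (2 ^ j) * q ^ j
          = ∑ j ∈ range n, a (2 ^ j) / (2 : ℝ) ^ ((j : ℝ) / 2) := by
            exact Finset.sum_congr rfl fun j _ => hterm j
        _ ≤ U := Summable.sum_le_tsum _ (fun j _ => div_nonneg (h0 _) (by positivity)) hdyad
    have step1 : ∑ r ∈ range R, (∑ j ∈ range (r + 1), a (2 ^ j)) * q ^ r
        = ∑ j ∈ Finset.Ico 0 R, ∑ r ∈ Finset.Ico j R, a (2 ^ j) * q ^ r := by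
      calc ∑ r ∈ range R, (∑ j ∈ range (r + 1), a (2 ^ j)) * q ^ r
          = ∑ r ∈ Finset.Ico 0 R, ∑ j ∈ Finset.Ico 0 (r + 1), a (2 ^ j) * q ^ r := by
            rw [Finset.range_eq_Ico]
            refine Finset.sum_congr rfl fun r _ => ?_
            rw [Finset.sum_mul, Finset.range_eq_Ico]
        _ = ∑ j ∈ Finset.Ico 0 R, ∑ r ∈ Finset.Ico j R, a (2 ^ j) * q ^ r :=
            (Finset.sum_Ico_Ico_comm 0 R fun j r => a (2 ^ j) * q ^ r).symm
    rw [step1]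
    have inner : ∀ j : ℕ, j < R → ∑ r ∈ Finset.Ico j R, a (2 ^ j) * q ^ r ≤
        (a (2 ^ j) * q ^ j) * (1 - q)⁻¹ := by
      intro j hj
      rw [← Finset.mul_sum]
      have hgeo : ∑ r ∈ Finset.Ico j R, q ^ r ≤ q ^ j * (1 - q)⁻¹ := by
        rw [Finset.sum_Ico_eq_sum_range]
        have : ∀ i, q ^ (j + i) = q ^ j * q ^ i := fun i => pow_add q j i
        rw [Finset.sum_congr rfl fun i _ => this i, ← Finset.mul_sum]
        apply mul_le_mul_of_nonneg_left _ (pow_nonneg hq0.le j)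
        calc ∑ i ∈ range (R - j), q ^ i
            ≤ ∑' i : ℕ, q ^ i := Summable.sum_le_tsum _ (fun i _ => pow_nonneg hq0.le i)
              (summable_geometric_of_lt_one hq0.le hq1)
          _ = (1 - q)⁻¹ := tsum_geometric_of_lt_one hq0.le hq1
      calc a (2 ^ j) * ∑ r ∈ Finset.Ico j R, q ^ r
          ≤ a (2 ^ j) * (q ^ j * (1 - q)⁻¹) :=
            mul_le_mul_of_nonneg_left hgeo (h0 _)
        _ = (a (2 ^ j) * q ^ j) * (1 - q)⁻¹ := by ring
    calc ∑ j ∈ Finset.Ico 0 R, ∑ r ∈ Finset.Ico j R, a (2 ^ j) * q ^ r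
        ≤ ∑ j ∈ Finset.Ico 0 R, (a (2 ^ j) * q ^ j) * (1 - q)⁻¹ := by
          apply Finset.sum_le_sum
          intro j hj
          rw [Finset.mem_Ico] at hj
          exact inner j hj.2
      _ = (∑ j ∈ range R, a (2 ^ j) * q ^ j) * (1 - q)⁻¹ := by
          rw [Finset.range_eq_Ico, Finset.sum_mul]
      _ ≤ U * (1 - q)⁻¹ := by
          apply mul_le_mul_of_nonneg_right (hU0 R)
          rw [inv_nonneg]; linarith
      _ = (1 - q)⁻¹ * U := by ring
  apply summable_of_sum_range_le (c := (1 - q)⁻¹ * U)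
  · intro n
    exact div_nonneg (h0 _) (by positivity)
  · intro n
    have hre : ∑ k ∈ range n, a (k + 1) / ((k : ℝ) + 1) ^ ((3 : ℝ) / 2)
        = ∑ k ∈ Finset.Ico 1 (n + 1), f' k := by
      rw [Finset.sum_Ico_eq_sum_range]
      simp only [Nat.add_sub_cancel]
      refine Finset.sum_congr rfl fun i _ => ?_
      rw [hf']
      simp only [add_comm 1 i]
      push_cast
      ring_nf
    rw [hre]
    calc ∑ k ∈ Finset.Ico 1 (n + 1), f' k
        ≤ ∑ k ∈ Finset.Ico 1 (2 ^ (n + 1)), f' k := by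
          apply Finset.sum_le_sum_of_subset_of_nonneg
          · apply Finset.Ico_subset_Ico le_rfl
            have := Nat.lt_two_pow_self (n := n)
            calc n + 1 ≤ 2 ^ n := this
              _ ≤ 2 ^ (n + 1) := Nat.pow_le_pow_right (by norm_num) (Nat.le_succ n)
          · intro k _ _; exact hf'0 k
      _ ≤ ∑ r ∈ range (n + 1), (∑ j ∈ range (r + 1), a (2 ^ j)) * q ^ r :=
          hchain (n + 1)
      _ ≤ (1 - q)⁻¹ * U := hswap (n + 1)


/-- If `Σ_r ‖E(S_{2^r}|F₀)‖₂ / 2^{r/2} < ∞` then the Maxwell–Woodroofe condition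
`Σ_k ‖E(S_k|F₀)‖₂ / k^{3/2} < ∞` holds, for a stationary adapted sequence. -/
theorem stmt5 {Ω : Type*} [m : MeasurableSpace Ω] (μ : Measure Ω) [IsProbabilityMeasure μ]
    (T : Ω → Ω) (hT : MeasurePreserving T μ μ) (hTbij : Function.Bijective T)
    (F₀ : MeasurableSpace Ω) (hF₀ : F₀ ≤ m)
    (hF₀T : F₀ ≤ F₀.comap T)
    (X : ℕ → Ω → ℝ)
    (hX0meas : Measurable[F₀] (X 0))
    (hX0 : MemLp (X 0) 2 μ) (hX0c : ∫ ω, X 0 ω ∂μ = 0)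
    (hstat : ∀ i, X i = X 0 ∘ T^[i])
    (S : ℕ → Ω → ℝ) (hS : ∀ n, S n = fun ω => ∑ i ∈ Finset.Icc 1 n, X i ω)
    (hsubadd : ∀ m' n : ℕ, (eLpNorm (μ[S (m' + n)|F₀]) 2 μ).toReal ≤
      (eLpNorm (μ[S m'|F₀]) 2 μ).toReal + (eLpNorm (μ[S n|F₀]) 2 μ).toReal)
    (hdyad : Summable fun r : ℕ =>
      (eLpNorm (μ[S (2 ^ r)|F₀]) 2 μ).toReal / (2 : ℝ) ^ ((r : ℝ) / 2)) :
    Summable fun k : ℕ =>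
      (eLpNorm (μ[S (k + 1)|F₀]) 2 μ).toReal / ((k : ℝ) + 1) ^ ((3 : ℝ) / 2) := by
  exact mw_main (fun n => (eLpNorm (μ[S n|F₀]) 2 μ).toReal)
    (fun n => ENNReal.toReal_nonneg) hsubadd hdyad
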